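/- Let d ≥ 1, let X ⊆ ℝ^d₊ be a convex set containing 0, let c : ℝ^d₊ → ℝ be concave, monotone non-decreasing with respect to the coordinatewise order, with c(0) = 0, and let v : X → ℝ. Call a pair (u, x̄) with u ∈ C and x̄ ∈ X feasible if u(x̄) − c(x̄) ≥ u(x) − c(x) for all x ∈ X. Then sup{ v(x̄) − u(x̄) : (u, x̄) feasible } = sup{ v(x) − c(x) : x ∈ X }; in other words, the buyer can extract the maximum possible total surplus. Moreover, if x* ∈ X with all coordinates strictly positive attains the right-hand supremum, then the pair consisting of the Leontief-type function u*(x) = p*·min{x₁/x*₁, …, x_d/x*_d, 1} with p* = c(x*) together with x* is feasible and attains the left-hand supremum, and the seller's revenue u*(x*) − c(x*) is 0. -/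

import Mathlib

/-- Membership in the class `C`: concave on the nonnegative orthant, monotone
non-decreasing on it, nonnegative on it, and `u(0) = 0`. -/
def InClassC (d : ℕ) (u : (Fin d → ℝ) → ℝ) : Prop :=
  (∀ x y : Fin d → ℝ, (∀ i, 0 ≤ x i) → (∀ i, 0 ≤ y i) →
    ∀ t ∈ Set.Icc (0:ℝ) 1,
      t * u x + (1 - t) * u y ≤ u (t • x + (1 - t) • y)) ∧
  (∀ x y : Fin d → ℝ, (∀ i, 0 ≤ x i) → (∀ i, x i ≤ y i) → u x ≤ u y) ∧
  (∀ x : Fin d → ℝ, (∀ i, 0 ≤ x i) → 0 ≤ u x) ∧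
  u 0 = 0

/-- Theorem 3: concave production cost. The buyer's equilibrium
surplus equals the maximum possible total surplus `sup_{x ∈ X} [v(x) − c(x)]`.
Moreover if `x*`, strictly positive, attains the right-hand supremum, then the
Leontief-type function `u*(x) = p*·min{xᵢ/x*ᵢ, 1}` with `p* = c(x*)` forms a
feasible pair with `x*` attaining the left-hand supremum, and the seller's
revenue `u*(x*) − c(x*)` is `0`. -/
lemma leontief_props (d : ℕ) (hd : 1 ≤ d)
    (c : (Fin d → ℝ) → ℝ)
    (hcconc : ∀ x y : Fin d → ℝ, (∀ i, 0 ≤ x i) → (∀ i, 0 ≤ y i) →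
      ∀ t ∈ Set.Icc (0:ℝ) 1,
        t * c x + (1 - t) * c y ≤ c (t • x + (1 - t) • y))
    (hcmono : ∀ x y : Fin d → ℝ, (∀ i, 0 ≤ x i) → (∀ i, x i ≤ y i) → c x ≤ c y)
    (hc0 : c 0 = 0)
    (x : Fin d → ℝ) (hx : ∀ i, 0 ≤ x i) :
    let g : Fin d → (Fin d → ℝ) → ℝ := fun i y => if x i = 0 then 1 else y i / x i
    let u : (Fin d → ℝ) → ℝ := fun y => c x * min (⨅ i, g i y) 1
    InClassC d u ∧ u x = c x ∧ (∀ y : Fin d → ℝ, (∀ i, 0 ≤ y i) → u y ≤ c y) := by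
  intro g u
  haveI : Nonempty (Fin d) := ⟨⟨0, hd⟩⟩
  have hcx : 0 ≤ c x := by
    have := hcmono 0 x (fun i => le_refl 0) hx
    simpa [hc0] using this
  have hbdd : ∀ y : Fin d → ℝ, BddBelow (Set.range fun i => g i y) :=
    fun y => (Set.finite_range _).bddBelow
  -- f := min (⨅ g i y) 1
  set f : (Fin d → ℝ) → ℝ := fun y => min (⨅ i, g i y) 1 with hf
  have hfle : ∀ y i, f y ≤ g i y := fun y i =>
    (min_le_left _ _).trans (ciInf_le (hbdd y) i)
  have hfle1 : ∀ y, f y ≤ 1 := fun y => min_le_right _ _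
  have hgmono : ∀ (i) (a b : Fin d → ℝ), (∀ j, a j ≤ b j) → g i a ≤ g i b := by
    intro i a b hab
    by_cases h : x i = 0
    · simp [g, h]
    · have hxi : 0 < x i := lt_of_le_of_ne (hx i) (Ne.symm h)
      simp only [g, h, if_false]
      have := mul_le_mul_of_nonneg_right (hab i) (inv_nonneg.2 (hx i))
      simpa [div_eq_mul_inv] using this
  have hgnonneg : ∀ (i) (y : Fin d → ℝ), (∀ j, 0 ≤ y j) → 0 ≤ g i y := by
    intro i y hy
    by_cases h : x i = 0
    · simp [g, h]
    · simp only [g, h, if_false]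
      exact div_nonneg (hy i) (hx i)
  have hfnonneg : ∀ y : Fin d → ℝ, (∀ j, 0 ≤ y j) → 0 ≤ f y := by
    intro y hy
    exact le_min (le_ciInf fun i => hgnonneg i y hy) one_pos.le
  have hfx : f x = 1 := by
    have : ∀ i, g i x = 1 := by
      intro i
      by_cases h : x i = 0
      · simp [g, h]
      · simp [g, h, div_self h]
    simp [hf, this]
  have hux : u x = c x := by
    show c x * f x = c x
    rw [hfx, mul_one]
  -- u y ≤ c y
  have hule : ∀ y : Fin d → ℝ, (∀ j, 0 ≤ y j) → u y ≤ c y := by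
    intro y hy
    set t := f y with ht
    have ht0 : 0 ≤ t := hfnonneg y hy
    have ht1 : t ≤ 1 := hfle1 y
    have htx : ∀ i, t * x i ≤ y i := by
      intro i
      by_cases h : x i = 0
      · simp [h]; exact hy i
      · have hxi : 0 < x i := lt_of_le_of_ne (hx i) (Ne.symm h)
        have := hfle y i
        simp only [g, h, if_false] at this
        calc t * x i ≤ (y i / x i) * x i := by nlinarith
          _ = y i := div_mul_cancel₀ _ h
    have h1 : c (t • x) ≤ c y := by
      apply hcmono _ _ (fun i => mul_nonneg ht0 (hx i))
      intro i; exact htx i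
    have h2 : t * c x ≤ c (t • x) := by
      have := hcconc x 0 hx (fun i => le_refl 0) t ⟨ht0, ht1⟩
      simpa [hc0] using this
    calc u y = t * c x := by simp [u, ht, mul_comm]; left; rfl
      _ ≤ c y := h2.trans h1
  refine ⟨⟨?_, ?_, ?_, ?_⟩, hux, hule⟩
  · -- concavity
    intro a b ha hb t ⟨ht0, ht1⟩
    have key : t * f a + (1 - t) * f b ≤ f (t • a + (1 - t) • b) := by
      apply le_min
      · apply le_ciInf
        intro i
        by_cases h : x i = 0
        · have : t * f a + (1 - t) * f b ≤ t * 1 + (1 - t) * 1 := by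
            have := hfle1 a; have := hfle1 b; nlinarith
          simpa [g, h] using this.trans_eq (by ring)
        · have hxi : 0 < x i := lt_of_le_of_ne (hx i) (Ne.symm h)
          have h1 : f a ≤ a i / x i := by have := hfle a i; simpa [g, h] using this
          have h2 : f b ≤ b i / x i := by have := hfle b i; simpa [g, h] using this
          have : g i (t • a + (1 - t) • b) = (t * a i + (1 - t) * b i) / x i := by
            simp [g, h]
          rw [this, le_div_iff₀ hxi]
          have ha' : f a * x i ≤ a i := (le_div_iff₀ hxi).1 h1
          have hb' : f b * x i ≤ b i := (le_div_iff₀ hxi).1 h2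
          nlinarith
      · have := hfle1 a; have := hfle1 b; nlinarith
    simp only [u]
    nlinarith [key, hcx]
  · -- monotone
    intro a b ha hab
    have : f a ≤ f b := le_min ((le_ciInf fun i => (hfle a i).trans (hgmono i a b hab)))
      (hfle1 a)
    simp only [u]
    nlinarith
  · intro y hy
    exact mul_nonneg hcx (hfnonneg y hy)
  · have : f 0 ≤ 1 := hfle1 0
    -- u 0 = c x * f 0 ; if x = 0, c x = 0; else f 0 = 0
    by_cases hx0 : x = 0
    · simp [u, hx0, hc0]
    · have : ∃ i, x i ≠ 0 := by
        by_contra h; push_neg at h; exact hx0 (funext h)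
      obtain ⟨i, hi⟩ := this
      have hf0 : f 0 = 0 := by
        apply le_antisymm
        · have := hfle 0 i
          simpa [g, hi] using this
        · exact hfnonneg 0 (fun j => le_refl 0)
      show c x * f 0 = 0
      rw [hf0, mul_zero]

theorem stmt7 (d : ℕ) (hd : 1 ≤ d)
    (X : Set (Fin d → ℝ)) (hXconv : Convex ℝ X) (hX0 : (0 : Fin d → ℝ) ∈ X)
    (hXpos : ∀ x ∈ X, ∀ i, 0 ≤ x i)
    (c : (Fin d → ℝ) → ℝ)
    (hcconc : ∀ x y : Fin d → ℝ, (∀ i, 0 ≤ x i) → (∀ i, 0 ≤ y i) →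
      ∀ t ∈ Set.Icc (0:ℝ) 1,
        t * c x + (1 - t) * c y ≤ c (t • x + (1 - t) • y))
    (hcmono : ∀ x y : Fin d → ℝ, (∀ i, 0 ≤ x i) → (∀ i, x i ≤ y i) → c x ≤ c y)
    (hc0 : c 0 = 0)
    (v : (Fin d → ℝ) → ℝ) :
    sSup {s : ℝ | ∃ u : (Fin d → ℝ) → ℝ, ∃ xbar ∈ X, InClassC d u ∧
        (∀ x ∈ X, u x - c x ≤ u xbar - c xbar) ∧ s = v xbar - u xbar}
      = sSup {s : ℝ | ∃ x ∈ X, s = v x - c x} ∧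
    (∀ xstar ∈ X, (∀ i, 0 < xstar i) →
      (∀ x ∈ X, v x - c x ≤ v xstar - c xstar) →
      ∀ ustar : (Fin d → ℝ) → ℝ,
        (∀ x : Fin d → ℝ,
          ustar x = (c xstar) * min (⨅ i, x i / xstar i) 1) →
        InClassC d ustar ∧
        (∀ x ∈ X, ustar x - c x ≤ ustar xstar - c xstar) ∧
        v xstar - ustar xstar
          = sSup {s : ℝ | ∃ u : (Fin d → ℝ) → ℝ, ∃ xbar ∈ X, InClassC d u ∧
              (∀ x ∈ X, u x - c x ≤ u xbar - c xbar) ∧ s = v xbar - u xbar} ∧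
        ustar xstar - c xstar = 0) := by
  haveI : Nonempty (Fin d) := ⟨⟨0, hd⟩⟩
  set A := {s : ℝ | ∃ u : (Fin d → ℝ) → ℝ, ∃ xbar ∈ X, InClassC d u ∧
      (∀ x ∈ X, u x - c x ≤ u xbar - c xbar) ∧ s = v xbar - u xbar} with hA
  set B := {s : ℝ | ∃ x ∈ X, s = v x - c x} with hB
  have key : ∀ x ∈ X, ∃ u : (Fin d → ℝ) → ℝ, InClassC d u ∧
      (∀ y ∈ X, u y - c y ≤ u x - c x) ∧ u x = c x := by
    intro x hxX
    obtain ⟨hC, hux, hule⟩ := leontief_props d hd c hcconc hcmono hc0 x (hXpos x hxX)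
    refine ⟨_, hC, ?_, hux⟩
    intro y hy
    have h1 := hule y (hXpos y hy)
    have h2 := hux
    beta_reduce at h1 h2 ⊢
    rw [h2]
    linarith
  have hABle : ∀ s ∈ A, ∃ t ∈ B, s ≤ t := by
    intro s hs
    obtain ⟨u, xbar, hxbar, hu, hfeas, rfl⟩ := hs
    have h0 := hfeas 0 hX0
    rw [hu.2.2.2, hc0] at h0
    exact ⟨v xbar - c xbar, ⟨xbar, hxbar, rfl⟩, by linarith⟩
  have hBAle : ∀ t ∈ B, ∃ s ∈ A, t ≤ s := by
    intro t ht
    obtain ⟨x, hx, rfl⟩ := ht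
    obtain ⟨u, hC, hfeas, hux⟩ := key x hx
    exact ⟨v x - u x, ⟨u, x, hx, hC, hfeas, rfl⟩, by rw [hux]⟩
  have part1 : sSup A = sSup B := csSup_eq_csSup_of_forall_exists_le hABle hBAle
  refine ⟨part1, ?_⟩
  intro xstar hxs hpos hmax ustar hust
  obtain ⟨hC, hux, hule⟩ := leontief_props d hd c hcconc hcmono hc0 xstar
    (fun i => (hpos i).le)
  have heq : ustar = fun y => c xstar *
      min (⨅ i, if xstar i = 0 then 1 else y i / xstar i) 1 := by
    funext y
    rw [hust y, iInf_congr (fun i => (if_neg (hpos i).ne').symm)]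
  subst heq
  have hsSupB : sSup B = v xstar - c xstar := by
    apply IsGreatest.csSup_eq
    constructor
    · exact ⟨xstar, hxs, rfl⟩
    · rintro t ⟨x, hx, rfl⟩
      exact hmax x hx
  have h2 := hux
  beta_reduce at h2
  refine ⟨hC, ?_, ?_, ?_⟩
  · intro x hx
    have h1 := hule x (hXpos x hx)
    beta_reduce at h1 ⊢
    rw [h2]
    linarith
  · beta_reduce
    rw [part1, hsSupB, h2]
  · beta_reduce
    rw [h2]
    ring
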